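/- In the setting of a parent four-momentum (E, p) decaying to a visible daughter (E_v, p_v) and an invisible daughter (E_i, p_i) (so E = E_v + E_i, p = p_v + p_i, each four-momentum causal), suppose in addition both daughters have well-defined equal rapidities: E_v > |p_{v,z}|, E_i > |p_{i,z}|, and ½ ln((E_v + p_{v,z})/(E_v − p_{v,z})) = ½ ln((E_i + p_{i,z})/(E_i − p_{i,z})), where p_z denotes the third momentum component. Then the transverse mass equals the parent mass: m_T(m_v, vT, m_i, qT) = √(E² − |p|²), where m_v, m_i are the invariant masses and vT, qT the transverse momenta of the two daughters. -/

import Mathlib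

open scoped RealInnerProductSpace

/-- Transverse energy `e(m,p) = √(m² + |p|²)`. -/
noncomputable def transverseEnergy (m : ℝ) (p : EuclideanSpace ℝ (Fin 2)) : ℝ :=
  Real.sqrt (m ^ 2 + ‖p‖ ^ 2)

/-- Transverse mass `m_T(m_v, vT, m_i, qT)`. -/
noncomputable def transverseMass (mv : ℝ) (vT : EuclideanSpace ℝ (Fin 2))
    (mi : ℝ) (qT : EuclideanSpace ℝ (Fin 2)) : ℝ :=
  Real.sqrt (mv ^ 2 + mi ^ 2 +
    2 * (transverseEnergy mv vT * transverseEnergy mi qT - ⟪vT, qT⟫))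

/-- Projection of a 3-momentum onto the transverse plane (first two coordinates). -/
noncomputable def projT (p : EuclideanSpace ℝ (Fin 3)) : EuclideanSpace ℝ (Fin 2) :=
  WithLp.toLp 2 (fun i : Fin 2 => p i.castSucc)

/-- Invariant mass `√(E² − |p|²)` of a 3+1 four-momentum `(E, p)`. -/
noncomputable def invariantMass (E : ℝ) (p : EuclideanSpace ℝ (Fin 3)) : ℝ :=
  Real.sqrt (E ^ 2 - ‖p‖ ^ 2)


lemma norm3_aux (x : EuclideanSpace ℝ (Fin 3)) : ‖x‖^2 = x 0^2 + x 1^2 + x 2^2 := by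
  rw [EuclideanSpace.norm_eq, Real.sq_sqrt (by positivity)]
  simp [Fin.sum_univ_three, sq_abs]

lemma normproj_aux (x : EuclideanSpace ℝ (Fin 3)) :
    ‖projT x‖^2 = x 0^2 + x 1^2 := by
  rw [EuclideanSpace.norm_eq, Real.sq_sqrt (by positivity)]
  simp [projT, Fin.sum_univ_two, sq_abs,
    show (Fin.castSucc 0 : Fin 3) = 0 from rfl, show (Fin.castSucc 1 : Fin 3) = 1 from rfl]

lemma innerproj_aux (x y : EuclideanSpace ℝ (Fin 3)) :
    ⟪projT x, projT y⟫ = x 0 * y 0 + x 1 * y 1 := by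
  simp [projT, PiLp.inner_apply, Fin.sum_univ_two, RCLike.inner_apply, mul_comm,
    show (Fin.castSucc 0 : Fin 3) = 0 from rfl, show (Fin.castSucc 1 : Fin 3) = 1 from rfl]

set_option maxHeartbeats 1000000 in
/-- if in addition the two daughters have well-defined and equal
rapidities, the transverse mass equals the parent mass. -/
theorem transverseMass_eq_parent_mass_of_equal_rapidity (E Ev Ei : ℝ)
    (p pv pinv : EuclideanSpace ℝ (Fin 3))
    (hE : E = Ev + Ei) (hp : p = pv + pinv) (hEp : ‖p‖ ≤ E)
    (hv : ‖pv‖ ≤ Ev) (hi : ‖pinv‖ ≤ Ei)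
    (hvz : |pv 2| < Ev) (hiz : |pinv 2| < Ei)
    (hrap : (1 / 2) * Real.log ((Ev + pv 2) / (Ev - pv 2)) =
            (1 / 2) * Real.log ((Ei + pinv 2) / (Ei - pinv 2))) :
    transverseMass (invariantMass Ev pv) (projT pv)
      (invariantMass Ei pinv) (projT pinv) = invariantMass E p := by
  have hc : |pv 2| ≤ ‖pv‖ := by
    have := norm3_aux pv; nlinarith [abs_nonneg (pv 2), norm_nonneg pv, sq_abs (pv 2)]
  have hf : |pinv 2| ≤ ‖pinv‖ := by
    have := norm3_aux pinv; nlinarith [abs_nonneg (pinv 2), norm_nonneg pinv, sq_abs (pinv 2)]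
  have hEv : (0:ℝ) ≤ Ev := le_trans (norm_nonneg pv) hv
  have hEi : (0:ℝ) ≤ Ei := le_trans (norm_nonneg pinv) hi
  have hvz1 : Ev - pv 2 > 0 := by cases abs_lt.mp hvz; linarith
  have hvz2 : Ev + pv 2 > 0 := by cases abs_lt.mp hvz; linarith
  have hiz1 : Ei - pinv 2 > 0 := by cases abs_lt.mp hiz; linarith
  have hiz2 : Ei + pinv 2 > 0 := by cases abs_lt.mp hiz; linarith
  -- equal rapidity ⇒ Ei * pv 2 = Ev * pinv 2
  have hkey : Ei * pv 2 = Ev * pinv 2 := by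
    have h1 : (Ev + pv 2) / (Ev - pv 2) = (Ei + pinv 2) / (Ei - pinv 2) := by
      have := Real.log_injOn_pos (Set.mem_Ioi.mpr (div_pos hvz2 hvz1))
        (Set.mem_Ioi.mpr (div_pos hiz2 hiz1))
      apply this; linarith [hrap]
    field_simp at h1; nlinarith [h1]
  -- masses squared
  have hmv : invariantMass Ev pv ^ 2 = Ev ^ 2 - ‖pv‖ ^ 2 := by
    rw [invariantMass, Real.sq_sqrt]; nlinarith [norm_nonneg pv]
  have hmi : invariantMass Ei pinv ^ 2 = Ei ^ 2 - ‖pinv‖ ^ 2 := by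
    rw [invariantMass, Real.sq_sqrt]; nlinarith [norm_nonneg pinv]
  -- transverse energies
  have hev : transverseEnergy (invariantMass Ev pv) (projT pv)
      = Real.sqrt (Ev ^ 2 - pv 2 ^ 2) := by
    rw [transverseEnergy, hmv, normproj_aux, norm3_aux]; ring_nf
  have hei : transverseEnergy (invariantMass Ei pinv) (projT pinv)
      = Real.sqrt (Ei ^ 2 - pinv 2 ^ 2) := by
    rw [transverseEnergy, hmi, normproj_aux, norm3_aux]; ring_nf
  have hprod : transverseEnergy (invariantMass Ev pv) (projT pv) *
      transverseEnergy (invariantMass Ei pinv) (projT pinv)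
      = Ev * Ei - pv 2 * pinv 2 := by
    rw [hev, hei, ← Real.sqrt_mul (by nlinarith [sq_abs (pv 2), abs_nonneg (pv 2)])]
    have h2 : (Ev ^ 2 - pv 2 ^ 2) * (Ei ^ 2 - pinv 2 ^ 2)
        = (Ev * Ei - pv 2 * pinv 2) ^ 2 := by nlinarith [hkey]
    rw [h2, Real.sqrt_sq]
    have h3 : |pv 2| * |pinv 2| ≤ Ev * Ei := mul_le_mul hvz.le hiz.le (abs_nonneg (pinv 2)) hEv
    have h4 : pv 2 * pinv 2 ≤ |pv 2 * pinv 2| := le_abs_self _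
    rw [abs_mul] at h4; linarith
  rw [transverseMass, hprod, innerproj_aux, hmv, hmi, invariantMass]
  congr 1
  rw [norm3_aux pv, norm3_aux pinv, norm3_aux p, hE, hp]
  simp [PiLp.add_apply]
  ring
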